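/- For all real a with 2 ≤ a ≤ 3 and all real x ≥ t > 0, one has (x - t/(2a))^a ≥ x^a - t·x^(a-1) + (t²/(2a))·x^(a-2). -/

import Mathlib

theorem stmt_8 (a x t : ℝ) (ha2 : 2 ≤ a) (ha3 : a ≤ 3) (ht : 0 < t) (hxt : t ≤ x) :
    x ^ a - t * x ^ (a - 1) + t ^ 2 / (2 * a) * x ^ (a - 2) ≤ (x - t / (2 * a)) ^ a := by
  have hx : 0 < x := lt_of_lt_of_le ht hxt
  have ha : (0:ℝ) < a := by linarith
  set s : ℝ := t / (2 * a) with hs_def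
  have hs : 0 < s := by positivity
  have hsx : s < x := by
    have : s ≤ t / 4 := by
      apply div_le_div_of_nonneg_left ht.le (by norm_num) (by linarith)
    linarith
  have h1 : -1 ≤ -(s / x) := by
    have : s / x ≤ 1 := (div_le_one hx).2 hsx.le
    linarith
  have key : 1 + a * (-(s / x)) ≤ (1 + -(s / x)) ^ a :=
    one_add_mul_self_le_rpow_one_add h1 (by linarith)
  have hxs : (0:ℝ) ≤ 1 + -(s / x) := by
    have : s / x ≤ 1 := (div_le_one hx).2 hsx.le
    linarith
  have heq : (x - s) ^ a = x ^ a * (1 + -(s / x)) ^ a := by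
    rw [← Real.mul_rpow (le_of_lt hx) hxs]
    congr 1
    field_simp
    ring
  have hmain : x ^ a - (t / 2) * x ^ (a - 1) ≤ (x - s) ^ a := by
    rw [heq]
    have := mul_le_mul_of_nonneg_left key (Real.rpow_nonneg hx.le a)
    have hxa1 : x ^ a * (a * (s / x)) = (t / 2) * x ^ (a - 1) := by
      rw [Real.rpow_sub hx, Real.rpow_one]
      field_simp [hs_def]
      rw [hs_def]; field_simp
    nlinarith [this]
  have harith : x ^ a - t * x ^ (a - 1) + t ^ 2 / (2 * a) * x ^ (a - 2)
      ≤ x ^ a - (t / 2) * x ^ (a - 1) := by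
    have hx2 : (0:ℝ) ≤ x ^ (a - 2) := Real.rpow_nonneg hx.le _
    have hx1 : x ^ (a - 1) = x ^ (a - 2) * x := by
      rw [← Real.rpow_add_one hx.ne' (a - 2)]; ring_nf
    rw [hx1]
    have hta : t ^ 2 / (2 * a) ≤ t / 2 * x := by
      rw [div_le_iff₀ (by linarith : (0:ℝ) < 2 * a)]
      nlinarith [mul_le_mul_of_nonneg_left hxt ht.le, mul_nonneg ht.le hx.le]
    nlinarith [mul_le_mul_of_nonneg_right hta hx2]
  linarith
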